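/- The only automorphism of a binary tree-child phylogenetic network fixing all leaves (as a leaf-labeled directed graph) is the identity. -/
import Mathlib


/-- In-degree of a node in a directed graph given by its arc relation. -/
noncomputable def indeg {V : Type} (A : V → V → Prop) (v : V) : ℕ := Nat.card {u : V // A u v}

/-- Out-degree of a node in a directed graph given by its arc relation. -/
noncomputable def outdeg {V : Type} (A : V → V → Prop) (v : V) : ℕ := Nat.card {u : V // A v u}

/-- A leaf: degrees (1,0). -/
def IsLeaf {V : Type} (A : V → V → Prop) (v : V) : Prop :=
  indeg A v = 1 ∧ outdeg A v = 0

/-- A tree node: degrees (1,0) (leaf), (0,2) (root) or (1,2) (internal tree node). -/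
def IsTreeNode {V : Type} (A : V → V → Prop) (v : V) : Prop :=
  (indeg A v = 1 ∧ outdeg A v = 0) ∨ (indeg A v = 0 ∧ outdeg A v = 2) ∨
    (indeg A v = 1 ∧ outdeg A v = 2)

/-- A hybrid node: degrees (2,1). -/
def IsHybrid {V : Type} (A : V → V → Prop) (v : V) : Prop :=
  indeg A v = 2 ∧ outdeg A v = 1

/-- A binary tree-child phylogenetic network on the (finite) node set `V`:
a DAG with a single root, all of whose nodes are tree nodes or hybrid nodes,
and where every non-leaf node has a child that is a tree node. -/
structure BTC (V : Type) [Finite V] where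
  Arc : V → V → Prop
  acyclic : ∀ v : V, ¬ Relation.TransGen Arc v v
  uniqueRoot : ∃! r : V, indeg Arc r = 0
  binary : ∀ v : V, IsTreeNode Arc v ∨ IsHybrid Arc v
  treeChild : ∀ v : V, 0 < outdeg Arc v → ∃ w : V, Arc v w ∧ IsTreeNode Arc w

/-- The only automorphism of a binary tree-child phylogenetic network fixing
all leaves (as a leaf-labeled directed graph) is the identity. -/
theorem stmt13 {V : Type} [Finite V] (N : BTC V) (φ : V ≃ V)
    (harc : ∀ u v : V, N.Arc u v ↔ N.Arc (φ u) (φ v))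
    (hleaf : ∀ v : V, IsLeaf N.Arc v → φ v = v) :
    ∀ v : V, φ v = v := by
  by_contra hcon
  push_neg at hcon
  obtain ⟨v0, hv0⟩ := hcon
  set S : Set V := {v | φ v ≠ v} with hS
  -- well-foundedness of the reversed transitive closure
  let r : V → V → Prop := fun a b => Relation.TransGen N.Arc b a
  have htrans : IsTrans V r := ⟨fun a b c hab hbc => hbc.trans hab⟩
  have hirr : IsIrrefl V r := ⟨fun a ha => N.acyclic a ha⟩
  have hwf : WellFounded r := Finite.wellFounded_of_trans_of_irrefl r
  obtain ⟨v, hvS, hmin⟩ := hwf.has_min S ⟨v0, hv0⟩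
  -- all children of v are fixed by φ
  have childfix : ∀ w : V, N.Arc v w → φ w = w := by
    intro w hw
    by_contra hwS
    exact hmin w hwS (Relation.TransGen.single hw)
  -- v is not a leaf
  have hnl : ¬ IsLeaf N.Arc v := fun hl => hvS (hleaf v hl)
  -- v has positive out-degree
  have hpos : 0 < outdeg N.Arc v := by
    rcases N.binary v with (⟨h1, h2⟩ | ⟨h1, h2⟩ | ⟨h1, h2⟩) | ⟨h1, h2⟩
    · exact absurd ⟨h1, h2⟩ hnl
    · omega
    · omega
    · omega
  obtain ⟨w, hvw, htw⟩ := N.treeChild v hpos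
  have hfw : φ w = w := childfix w hvw
  have hφvw : N.Arc (φ v) w := by
    have := (harc v w).mp hvw
    rwa [hfw] at this
  -- w has two distinct parents v and φ v, so indeg w ≥ 2
  have hne : (⟨v, hvw⟩ : {u : V // N.Arc u w}) ≠ ⟨φ v, hφvw⟩ := by
    intro h
    exact hvS (congrArg Subtype.val h).symm
  have hnontriv : Nontrivial {u : V // N.Arc u w} := ⟨⟨_, _, hne⟩⟩
  have h2 : 1 < indeg N.Arc w := by
    unfold indeg
    exact Finite.one_lt_card_iff_nontrivial.mpr hnontriv
  rcases htw with ⟨h1, h2⟩ | ⟨h1, h2⟩ | ⟨h1, h2⟩ <;> omega
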